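/- Almost-sure absorption in finite Markov chains: let P be the transition function of a finite MC over finite nonempty state type S, let G ⊆ S, and let B = B_P(G) be the set of states with no path to G under P. Then for every state s, Prob_P(s, G ∪ B) = 1. -/
import Mathlib


open scoped Classical BigOperators

/-- `n`-step reachability probability `Pr_P^n(s, G)`. -/
noncomputable def Pr {S : Type*} [Fintype S] (P : S → S → ℝ) : ℕ → S → Set S → ℝ
  | 0, s, G => if s ∈ G then 1 else 0
  | n + 1, s, G => if s ∈ G then 1 else ∑ t, P s t * Pr P n t G

/-- Reachability probability `Prob_P(s, G) = ⨆ n, Pr_P^n(s, G)`. -/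
noncomputable def Prob {S : Type*} [Fintype S] (P : S → S → ℝ) (s : S) (G : Set S) : ℝ :=
  ⨆ n : ℕ, Pr P n s G

/-- `C`-restriction of `P`: states outside `C` are made absorbing. -/
noncomputable def restrictMC {S : Type*} (C : Set S) (P : S → S → ℝ) (s t : S) : ℝ :=
  if s ∈ C then P s t else (if t = s then 1 else 0)

/-- `n`-step probability of reaching `B` while avoiding `G`. -/
noncomputable def APr {S : Type*} [Fintype S] (P : S → S → ℝ) : ℕ → S → Set S → Set S → ℝ
  | 0, s, B, _ => if s ∈ B then 1 else 0
  | n + 1, s, B, G => if s ∈ B then 1 else if s ∈ G then 0 else ∑ t, P s t * APr P n t B G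

/-- `AProb_P(s, B, G) = ⨆ n, APr_P^n(s, B, G)`. -/
noncomputable def AProb {S : Type*} [Fintype S] (P : S → S → ℝ) (s : S) (B G : Set S) : ℝ :=
  ⨆ n : ℕ, APr P n s B G

/-- `s` has a path to `G` under `P`. -/
def HasPathTo {S : Type*} (P : S → S → ℝ) (s : S) (G : Set S) : Prop :=
  ∃ (m : ℕ) (u : ℕ → S), u 0 = s ∧ (∀ i < m, 0 < P (u i) (u (i + 1))) ∧ u m ∈ G

/-- `B_P(G)`: the set of states with no path to `G` under `P`. -/
def BSet {S : Type*} (P : S → S → ℝ) (G : Set S) : Set S :=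
  {s | ¬ HasPathTo P s G}

/-- Transition function `P_r` of the instantiated MC `D_r` of a family `𝔓`. -/
noncomputable def Pinst {S K : Type*} [Fintype K] (𝔓 : S → K → ℝ) (r : K → S) (s t : S) : ℝ :=
  ∑ k, if r k = t then 𝔓 s k else 0

/-- Parameter `k` occurs at some state of `C`. -/
def OccursIn {S K : Type*} (𝔓 : S → K → ℝ) (C : Set S) (k : K) : Prop :=
  ∃ s ∈ C, 0 < 𝔓 s k

/-- `u` is reachable from `s0` under `P`. -/
def ReachableFrom {S : Type*} (P : S → S → ℝ) (s0 u : S) : Prop :=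
  ∃ (m : ℕ) (v : ℕ → S), v 0 = s0 ∧ (∀ i < m, 0 < P (v i) (v (i + 1))) ∧ v m = u

section Aux

variable {S : Type*} [Fintype S]

lemma Pr_nonneg (P : S → S → ℝ) (hP0 : ∀ s t, 0 ≤ P s t) :
    ∀ (n : ℕ) (s : S) (G : Set S), 0 ≤ Pr P n s G
  | 0, s, G => by simp only [Pr]; split <;> norm_num
  | n+1, s, G => by
      simp only [Pr]; split
      · norm_num
      · exact Finset.sum_nonneg fun t _ => mul_nonneg (hP0 s t) (Pr_nonneg P hP0 n t G)

lemma Pr_le_one (P : S → S → ℝ) (hP0 : ∀ s t, 0 ≤ P s t) (hP1 : ∀ s, ∑ t, P s t = 1) :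
    ∀ (n : ℕ) (s : S) (G : Set S), Pr P n s G ≤ 1
  | 0, s, G => by simp only [Pr]; split <;> norm_num
  | n+1, s, G => by
      simp only [Pr]; split
      · exact le_refl 1
      · calc ∑ t, P s t * Pr P n t G ≤ ∑ t, P s t * 1 :=
              Finset.sum_le_sum fun t _ =>
                mul_le_mul_of_nonneg_left (Pr_le_one P hP0 hP1 n t G) (hP0 s t)
          _ = 1 := by simp [hP1 s]

lemma Pr_of_mem (P : S → S → ℝ) (n : ℕ) {s : S} {G : Set S} (hs : s ∈ G) :
    Pr P n s G = 1 := by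
  cases n <;> simp [Pr, hs]

lemma Pr_succ_le (P : S → S → ℝ) (hP0 : ∀ s t, 0 ≤ P s t) :
    ∀ (n : ℕ) (s : S) (G : Set S), Pr P n s G ≤ Pr P (n+1) s G
  | 0, s, G => by
      by_cases hs : s ∈ G
      · simp [Pr, hs]
      · simp only [Pr, if_neg hs]
        exact Finset.sum_nonneg fun t _ => mul_nonneg (hP0 s t)
          (Pr_nonneg P hP0 0 t G)
  | n+1, s, G => by
      by_cases hs : s ∈ G
      · simp [Pr, hs]
      · show (if s ∈ G then _ else _) ≤ (if s ∈ G then _ else _)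
        rw [if_neg hs, if_neg hs]
        exact Finset.sum_le_sum fun t _ =>
          mul_le_mul_of_nonneg_left (Pr_succ_le P hP0 n t G) (hP0 s t)

lemma Pr_mono (P : S → S → ℝ) (hP0 : ∀ s t, 0 ≤ P s t) (s : S) (G : Set S) :
    Monotone (fun n => Pr P n s G) :=
  monotone_nat_of_le_succ fun n => Pr_succ_le P hP0 n s G

lemma Pr_pos_of_path (P : S → S → ℝ) (hP0 : ∀ s t, 0 ≤ P s t) (G : Set S) :
    ∀ (m : ℕ) (u : ℕ → S), (∀ i < m, 0 < P (u i) (u (i + 1))) → u m ∈ G →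
      0 < Pr P m (u 0) G
  | 0, u, _, hm => by simp [Pr, hm]
  | m+1, u, hpos, hm => by
      by_cases hs : u 0 ∈ G
      · rw [Pr_of_mem P _ hs]; norm_num
      · have ih : 0 < Pr P m (u 1) G := by
          have := Pr_pos_of_path P hP0 G m (fun i => u (i+1))
            (fun i hi => hpos (i+1) (by omega)) hm
          simpa using this
        simp only [Pr, if_neg hs]
        have h1 : 0 < P (u 0) (u 1) * Pr P m (u 1) G :=
          mul_pos (hpos 0 (by omega)) ih
        refine lt_of_lt_of_le h1 ?_
        exact Finset.single_le_sum
          (fun t _ => mul_nonneg (hP0 (u 0) t) (Pr_nonneg P hP0 m t G))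
          (Finset.mem_univ (u 1))

lemma Pr_contract (P : S → S → ℝ) (hP0 : ∀ s t, 0 ≤ P s t) (hP1 : ∀ s, ∑ t, P s t = 1)
    (T : Set S) (n : ℕ) (c : ℝ) (hc : ∀ t, 1 - Pr P n t T ≤ c) :
    ∀ (a : ℕ) (s : S), 1 - Pr P (a + n) s T ≤ c * (1 - Pr P a s T)
  | 0, s => by
      by_cases hs : s ∈ T
      · rw [Pr_of_mem P _ hs, Pr_of_mem P _ hs]; simp
      · have : Pr P 0 s T = 0 := by simp [Pr, hs]
        simpa [this] using hc s
  | a+1, s => by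
      by_cases hs : s ∈ T
      · rw [Pr_of_mem P _ hs, Pr_of_mem P _ hs]; simp
      · have hrw : a + 1 + n = (a + n) + 1 := by omega
        rw [hrw]
        have e1 : Pr P ((a+n)+1) s T = ∑ t, P s t * Pr P (a+n) t T := by
          simp [Pr, hs]
        have e2 : Pr P (a+1) s T = ∑ t, P s t * Pr P a t T := by
          simp [Pr, hs]
        rw [e1, e2]
        have key : ∀ (b : ℕ), 1 - ∑ t, P s t * Pr P b t T
            = ∑ t, P s t * (1 - Pr P b t T) := by
          intro b
          simp [mul_sub, Finset.sum_sub_distrib, hP1 s]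
        rw [key, key, Finset.mul_sum]
        refine Finset.sum_le_sum fun t _ => ?_
        calc P s t * (1 - Pr P (a + n) t T)
            ≤ P s t * (c * (1 - Pr P a t T)) :=
              mul_le_mul_of_nonneg_left (Pr_contract P hP0 hP1 T n c hc a t) (hP0 s t)
          _ = c * (P s t * (1 - Pr P a t T)) := by ring

end Aux

/-- almost-sure absorption: `G ∪ B_P(G)` is reached with probability 1. -/
theorem stmt_6 {S : Type*} [Fintype S] [Nonempty S] (P : S → S → ℝ)
    (hP0 : ∀ s t, 0 ≤ P s t) (hP1 : ∀ s, ∑ t, P s t = 1)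
    (G : Set S) (s : S) :
    Prob P s (G ∪ BSet P G) = 1 := by
  set T : Set S := G ∪ BSet P G with hT
  -- every state has a path to T
  have hpath : ∀ u : S, HasPathTo P u T := by
    intro u
    by_cases hu : u ∈ BSet P G
    · exact ⟨0, fun _ => u, rfl, fun i hi => absurd hi (by omega), Or.inr hu⟩
    · have : HasPathTo P u G := not_not.mp hu
      obtain ⟨m, w, hw0, hwpos, hwm⟩ := this
      exact ⟨m, w, hw0, hwpos, Or.inl hwm⟩
  -- a uniform horizon N with positive reach probability
  let m : S → ℕ := fun u => (hpath u).choose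
  let N : ℕ := Finset.univ.sup m
  have hposN : ∀ u : S, 0 < Pr P N u T := by
    intro u
    obtain ⟨w, hw0, hwpos, hwm⟩ := (hpath u).choose_spec
    have h1 : 0 < Pr P (m u) u T := by
      have := Pr_pos_of_path P hP0 T (m u) w hwpos hwm
      rwa [hw0] at this
    exact lt_of_lt_of_le h1 (Pr_mono P hP0 u T (Finset.le_sup (Finset.mem_univ u)))
  -- minimum of these probabilities
  let ε : ℝ := Finset.univ.inf' Finset.univ_nonempty (fun u => Pr P N u T)
  have hε_pos : 0 < ε := by
    rw [Finset.lt_inf'_iff]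
    exact fun u _ => hposN u
  have hε_le : ε ≤ 1 := by
    obtain ⟨u⟩ := ‹Nonempty S›
    exact le_trans (Finset.inf'_le _ (Finset.mem_univ u)) (Pr_le_one P hP0 hP1 N u T)
  have hc_bound : ∀ k : ℕ, ∀ u : S, 1 - Pr P (k * N) u T ≤ (1 - ε) ^ k := by
    intro k
    induction k with
    | zero => intro u; simpa using Pr_nonneg P hP0 0 u T
    | succ k ih =>
        intro u
        have hstep := Pr_contract P hP0 hP1 T (k * N) ((1 - ε) ^ k) ih N u
        have hNε : 1 - Pr P N u T ≤ 1 - ε := by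
          have : ε ≤ Pr P N u T := Finset.inf'_le _ (Finset.mem_univ u)
          linarith
        have hrw : (k + 1) * N = N + k * N := by ring
        rw [hrw]
        calc 1 - Pr P (N + k * N) u T ≤ (1 - ε) ^ k * (1 - Pr P N u T) := hstep
          _ ≤ (1 - ε) ^ k * (1 - ε) :=
              mul_le_mul_of_nonneg_left hNε (pow_nonneg (by linarith) k)
          _ = (1 - ε) ^ (k + 1) := by ring
  -- conclude
  have hbdd : BddAbove (Set.range fun n => Pr P n s T) :=
    ⟨1, by rintro x ⟨n, rfl⟩; exact Pr_le_one P hP0 hP1 n s T⟩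
  refine le_antisymm (ciSup_le fun n => Pr_le_one P hP0 hP1 n s T) ?_
  have htend : Filter.Tendsto (fun k : ℕ => 1 - (1 - ε) ^ k) Filter.atTop (nhds 1) := by
    have h0 : (0:ℝ) ≤ 1 - ε := by linarith
    have h1 : (1:ℝ) - ε < 1 := by linarith
    have := tendsto_pow_atTop_nhds_zero_of_lt_one h0 h1
    simpa using (tendsto_const_nhds.sub this)
  show (1:ℝ) ≤ ⨆ n : ℕ, Pr P n s T
  refine le_of_tendsto htend (Filter.Eventually.of_forall fun k => ?_)
  calc 1 - (1 - ε) ^ k ≤ Pr P (k * N) s T := by linarith [hc_bound k s]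
    _ ≤ ⨆ n : ℕ, Pr P n s T := le_ciSup hbdd (k * N)
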